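/- For all t>0, a>0 and ξ∈ℝ, one has ∫_ℝ (∂²₁E)(ξ−w₁, a) Γ₀(w₁,t) dw₁ = −(1/2) ∫_ℝ Q_a(ξ−r) ∂_r Γ₀(r,t) dr, where ∂²₁E(z) = (z₁²−z₂²)/(2π|z|⁴) is the second tangential derivative of the Newtonian potential and Q_s(r)=r/(π(r²+s²)) is the conjugate Poisson kernel. Consequently, for x,z ∈ ℝ²₊, 0<w₂<x₂ and t>0, ∫_ℝ ∂²_{x₁}E(x−(w₁,w₂)) Γ((w₁,w₂)−z*, t) dw₁ = −(1/2) Γ₀(w₂+z₂,t) (Q_{x₂−w₂} *₁ ∂₁Γ₀(·,t))(x₁−z₁), where *₁ denotes convolution on ℝ. -/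

import Mathlib

open MeasureTheory Real
open scoped ENNReal

noncomputable section

/-- The open upper half plane ℝ²₊ = {x : x₂ > 0}. -/
def upperHalf : Set (ℝ × ℝ) := {x | 0 < x.2}

/-- 2D heat kernel Γ(x,t) = (4πt)⁻¹ exp(−|x|²/(4t)). -/
def heatK (x : ℝ × ℝ) (t : ℝ) : ℝ :=
  (4 * π * t)⁻¹ * Real.exp (-(x.1 ^ 2 + x.2 ^ 2) / (4 * t))

/-- 1D heat kernel Γ₀(r,t) = (4πt)^{-1/2} exp(−r²/(4t)). -/
def heatK1 (r t : ℝ) : ℝ :=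
  (Real.sqrt (4 * π * t))⁻¹ * Real.exp (-r ^ 2 / (4 * t))

/-- ∂²_{z₁} E(z) = (z₁² − z₂²)/(2π|z|⁴), for E(z) = −(2π)⁻¹ log|z|. -/
def d2E (z : ℝ × ℝ) : ℝ :=
  (z.1 ^ 2 - z.2 ^ 2) / (2 * π * (z.1 ^ 2 + z.2 ^ 2) ^ 2)

/-- Poisson kernel P_s(r) = s/(π(r²+s²)). -/
def Pker (s r : ℝ) : ℝ := s / (π * (r ^ 2 + s ^ 2))

/-- Conjugate Poisson kernel Q_s(r) = r/(π(r²+s²)). -/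
def Qker (s r : ℝ) : ℝ := r / (π * (r ^ 2 + s ^ 2))

/-- ∇⊥E(z) = (∂₂E(z), −∂₁E(z)) for E(z) = −(2π)⁻¹ log|z|. -/
def gradPerpE (z : ℝ × ℝ) : ℝ × ℝ :=
  (-z.2 / (2 * π * (z.1 ^ 2 + z.2 ^ 2)), z.1 / (2 * π * (z.1 ^ 2 + z.2 ^ 2)))

/-- The Biot–Savart kernel ∇⊥_x D(x,y) = ∇⊥E(x−y) − ∇⊥E(x−y*). -/
def bsKernel (x y : ℝ × ℝ) : ℝ × ℝ :=
  gradPerpE (x.1 - y.1, x.2 - y.2) - gradPerpE (x.1 - y.1, x.2 + y.2)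

/-- Integral of a real function against a finite signed measure (via Jordan decomposition). -/
def sInt (μ : SignedMeasure (ℝ × ℝ)) (f : ℝ × ℝ → ℝ) : ℝ :=
  (∫ y, f y ∂μ.toJordanDecomposition.posPart) - ∫ y, f y ∂μ.toJordanDecomposition.negPart

/-- Integral of a vector-valued function against a finite signed measure. -/
def sIntV (μ : SignedMeasure (ℝ × ℝ)) (f : ℝ × ℝ → ℝ × ℝ) : ℝ × ℝ :=
  (∫ y, f y ∂μ.toJordanDecomposition.posPart) - ∫ y, f y ∂μ.toJordanDecomposition.negPart

/-- Total variation norm ‖μ‖_M of a finite signed measure. -/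
def normM (μ : SignedMeasure (ℝ × ℝ)) : ℝ := (μ.totalVariation Set.univ).toReal

/-- The vorticity kernel W(x,y,t). -/
def Wk (x y : ℝ × ℝ) (t : ℝ) : ℝ :=
  heatK (x.1 - y.1, x.2 - y.2) t + heatK (x.1 - y.1, x.2 + y.2) t
    + 4 * ∫ z₂ in (0:ℝ)..y.2, ∫ z₁ : ℝ, heatK (x.1 - z₁, x.2 + z₂) t * d2E (z₁ - y.1, z₂ - y.2)
    - 2 * heatK1 x.2 t * ∫ z₁ : ℝ, heatK1 (x.1 - z₁) t * Pker y.2 (z₁ - y.1)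

/-- T(t)ω₀(x) = ∫ W(x,y,t) dω₀(y) for a finite signed measure ω₀. -/
def Tsg (ω₀ : SignedMeasure (ℝ × ℝ)) (t : ℝ) (x : ℝ × ℝ) : ℝ :=
  sInt ω₀ (fun y => Wk x y t)

/-- The boundary trace operator T₁μ(x₁) = π⁻¹ ∫ y₂/((x₁−y₁)²+y₂²) dμ(y). -/
def T1op (μ : SignedMeasure (ℝ × ℝ)) (x₁ : ℝ) : ℝ :=
  π⁻¹ * sInt μ (fun y => y.2 / ((x₁ - y.1) ^ 2 + y.2 ^ 2))

lemma hasDerivAt_heatK1 {t : ℝ} (ht : 0 < t) (r : ℝ) :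
    HasDerivAt (fun s => heatK1 s t) (-(r / (2 * t)) * heatK1 r t) r := by
  have h1 : HasDerivAt (fun s : ℝ => -s ^ 2 / (4 * t)) (-(2 * r) / (4 * t)) r := by
    have := ((hasDerivAt_pow 2 r).neg).div_const (4 * t)
    simpa using this
  have h2 := (Real.hasDerivAt_exp (-r ^ 2 / (4 * t))).comp r h1
  have h3 := h2.const_mul ((Real.sqrt (4 * π * t))⁻¹)
  refine h3.congr_deriv ?_
  rw [heatK1]
  field_simp
  ring

lemma deriv_heatK1 {t : ℝ} (ht : 0 < t) (r : ℝ) :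
    deriv (fun s => heatK1 s t) r = -(r / (2 * t)) * heatK1 r t :=
  (hasDerivAt_heatK1 ht r).deriv

lemma hasDerivAt_Qker {a : ℝ} (ha : 0 < a) (x : ℝ) :
    HasDerivAt (fun x => Qker a x) ((a ^ 2 - x ^ 2) / (π * (x ^ 2 + a ^ 2) ^ 2)) x := by
  have hden : π * (x ^ 2 + a ^ 2) ≠ 0 := by positivity
  have h1 := (hasDerivAt_id x).div
    (((hasDerivAt_pow 2 x).add_const (a ^ 2)).const_mul π) hden
  refine h1.congr_deriv ?_
  have h2 : x ^ 2 + a ^ 2 ≠ 0 := by positivity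
  simp only [id]
  field_simp
  ring

lemma hasDerivAt_u {a : ℝ} (ha : 0 < a) (ξ r : ℝ) :
    HasDerivAt (fun r => Qker a (ξ - r)) (2 * d2E (ξ - r, a)) r := by
  have h1 : HasDerivAt (fun r : ℝ => ξ - r) (-1) r := (hasDerivAt_id r).const_sub ξ
  have h2 := (hasDerivAt_Qker ha (ξ - r)).comp r h1
  refine h2.congr_deriv ?_
  have h3 : (ξ - r) ^ 2 + a ^ 2 ≠ 0 := by positivity
  rw [d2E]
  field_simp
  ring

lemma abs_Qker_le {a : ℝ} (ha : 0 < a) (x : ℝ) : |Qker a x| ≤ (2 * π * a)⁻¹ := by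
  have hd : (0:ℝ) < π * (x ^ 2 + a ^ 2) := by positivity
  rw [Qker, abs_div, abs_of_pos hd, inv_eq_one_div, div_le_div_iff₀ hd (by positivity)]
  nlinarith [sq_nonneg (|x| - a), sq_abs x, pi_pos, abs_nonneg x]

lemma abs_d2E_le {a : ℝ} (ha : 0 < a) (x : ℝ) : |d2E (x, a)| ≤ (2 * π * a ^ 2)⁻¹ := by
  have hd : (0:ℝ) < 2 * π * (x ^ 2 + a ^ 2) ^ 2 := by positivity
  have h1 : |x ^ 2 - a ^ 2| ≤ x ^ 2 + a ^ 2 := by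
    rw [abs_le]; constructor <;> nlinarith [sq_nonneg x, sq_nonneg a]
  rw [d2E, abs_div, abs_of_pos hd, inv_eq_one_div, div_le_div_iff₀ hd (by positivity)]
  have h2 : |x ^ 2 - a ^ 2| * a ^ 2 ≤ (x ^ 2 + a ^ 2) * (x ^ 2 + a ^ 2) := by
    have := mul_le_mul h1 (by nlinarith [sq_nonneg x] : a ^ 2 ≤ x ^ 2 + a ^ 2)
      (by positivity) (by positivity)
    linarith
  nlinarith [pi_pos]

lemma integrable_heatK1 {t : ℝ} (ht : 0 < t) : Integrable (fun r => heatK1 r t) := by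
  have h : (fun r : ℝ => heatK1 r t)
      = fun r => (Real.sqrt (4 * π * t))⁻¹ * Real.exp (-(4 * t)⁻¹ * r ^ 2) := by
    funext r; rw [heatK1]; congr 1; ring
  rw [h]
  exact (integrable_exp_neg_mul_sq (by positivity)).const_mul _

lemma integrable_deriv_heatK1 {t : ℝ} (ht : 0 < t) :
    Integrable (fun r => -(r / (2 * t)) * heatK1 r t) := by
  have h : (fun r : ℝ => -(r / (2 * t)) * heatK1 r t)
      = fun r => (-(2 * t)⁻¹ * (Real.sqrt (4 * π * t))⁻¹)
          * (r * Real.exp (-(4 * t)⁻¹ * r ^ 2)) := by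
    funext r; rw [heatK1]
    have : Real.exp (-r ^ 2 / (4 * t)) = Real.exp (-(4 * t)⁻¹ * r ^ 2) := by
      congr 1; ring
    rw [this]; ring
  rw [h]
  exact (integrable_mul_exp_neg_mul_sq (by positivity)).const_mul _

lemma continuous_Qker {a : ℝ} (ha : 0 < a) : Continuous (fun x => Qker a x) := by
  apply Continuous.div (by continuity) (by continuity)
  intro x; positivity

lemma part1 {t : ℝ} (ht : 0 < t) {a : ℝ} (ha : 0 < a) (ξ : ℝ) :
    (∫ w₁ : ℝ, d2E (ξ - w₁, a) * heatK1 w₁ t)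
      = -(1/2) * ∫ r : ℝ, Qker a (ξ - r) * deriv (fun s => heatK1 s t) r := by
  set u : ℝ → ℝ := fun r => Qker a (ξ - r) with hu_def
  set u' : ℝ → ℝ := fun r => 2 * d2E (ξ - r, a) with hu'_def
  set v : ℝ → ℝ := fun r => heatK1 r t with hv_def
  set v' : ℝ → ℝ := fun r => -(r / (2 * t)) * heatK1 r t with hv'_def
  have hu : ∀ r, HasDerivAt u (u' r) r := fun r => hasDerivAt_u ha ξ r
  have hv : ∀ r, HasDerivAt v (v' r) r := fun r => hasDerivAt_heatK1 ht r
  have hucont : Continuous u := (continuous_Qker ha).comp (by continuity)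
  have hu'cont : Continuous u' := by
    apply Continuous.mul continuous_const
    apply Continuous.div (by continuity) (by continuity)
    intro x
    have : (ξ - x) ^ 2 + a ^ 2 > 0 := by positivity
    positivity
  have hubd : ∃ C, ∀ x, ‖u x‖ ≤ C :=
    ⟨(2 * π * a)⁻¹, fun x => abs_Qker_le ha (ξ - x)⟩
  have hu'bd : ∃ C, ∀ x, ‖u' x‖ ≤ C := by
    refine ⟨2 * (2 * π * a ^ 2)⁻¹, fun x => ?_⟩
    have := abs_d2E_le ha (ξ - x)
    simp only [hu'_def, norm_mul, Real.norm_eq_abs]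
    rw [abs_two]
    nlinarith [abs_nonneg (d2E (ξ - x, a))]
  have huv' : Integrable (u * v') :=
    (integrable_deriv_heatK1 ht).bdd_mul hucont.aestronglyMeasurable (ae_of_all _ hubd.choose_spec)
  have hu'v : Integrable (u' * v) :=
    (integrable_heatK1 ht).bdd_mul hu'cont.aestronglyMeasurable (ae_of_all _ hu'bd.choose_spec)
  have huv : Integrable (u * v) :=
    (integrable_heatK1 ht).bdd_mul hucont.aestronglyMeasurable (ae_of_all _ hubd.choose_spec)
  have key := integral_mul_deriv_eq_deriv_mul_of_integrable (fun r _ => hu r) (fun r _ => hv r) huv' hu'v huv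
  have hL : (∫ w₁ : ℝ, d2E (ξ - w₁, a) * heatK1 w₁ t)
      = (1/2) * ∫ r : ℝ, u' r * v r := by
    rw [← integral_const_mul]
    congr 1; funext r
    simp only [hu'_def, hv_def]; ring
  have hR : (∫ r : ℝ, Qker a (ξ - r) * deriv (fun s => heatK1 s t) r)
      = ∫ r : ℝ, u r * v' r := by
    congr 1; funext r
    rw [deriv_heatK1 ht]
  rw [hL, hR, key]
  ring

lemma heatK_split {t : ℝ} (ht : 0 < t) (r s : ℝ) :
    heatK (r, s) t = heatK1 r t * heatK1 s t := by
  have hs : (Real.sqrt (4 * π * t))⁻¹ * (Real.sqrt (4 * π * t))⁻¹ = (4 * π * t)⁻¹ := by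
    rw [← mul_inv, Real.mul_self_sqrt (by positivity)]
  have he : Real.exp (-r ^ 2 / (4 * t)) * Real.exp (-s ^ 2 / (4 * t))
      = Real.exp (-(r ^ 2 + s ^ 2) / (4 * t)) := by
    rw [← Real.exp_add]; congr 1; ring
  simp only [heatK, heatK1]
  rw [← hs, ← he]
  ring

/-- ∫_ℝ (∂²₁E)(ξ−w₁,a) Γ₀(w₁,t) dw₁ = −(1/2)∫_ℝ Q_a(ξ−r) ∂_rΓ₀(r,t) dr, and
consequently for x,z ∈ ℝ²₊, 0 < w₂ < x₂,
∫_ℝ ∂²_{x₁}E(x−(w₁,w₂)) Γ((w₁,w₂)−z*,t) dw₁ = −(1/2)Γ₀(w₂+z₂,t)(Q_{x₂−w₂} *₁ ∂₁Γ₀(·,t))(x₁−z₁). -/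
theorem d2E_conv_heat_eq_conjPoisson :
    (∀ t > (0:ℝ), ∀ a > (0:ℝ), ∀ ξ : ℝ,
      (∫ w₁ : ℝ, d2E (ξ - w₁, a) * heatK1 w₁ t)
        = -(1/2) * ∫ r : ℝ, Qker a (ξ - r) * deriv (fun s => heatK1 s t) r)
    ∧
    (∀ t > (0:ℝ), ∀ x ∈ upperHalf, ∀ z ∈ upperHalf, ∀ w₂ : ℝ, 0 < w₂ → w₂ < x.2 →
      (∫ w₁ : ℝ, d2E (x.1 - w₁, x.2 - w₂) * heatK (w₁ - z.1, w₂ + z.2) t)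
        = -(1/2) * heatK1 (w₂ + z.2) t
            * ∫ r : ℝ, Qker (x.2 - w₂) (x.1 - z.1 - r) * deriv (fun s => heatK1 s t) r) := by
  constructor
  · intro t ht a ha ξ
    exact part1 ht ha ξ
  · intro t ht x hx z hz w₂ hw₂ hw₂x
    have ha : 0 < x.2 - w₂ := sub_pos.mpr hw₂x
    have h1 : (∫ w₁ : ℝ, d2E (x.1 - w₁, x.2 - w₂) * heatK (w₁ - z.1, w₂ + z.2) t)
        = (∫ w₁ : ℝ, d2E (x.1 - w₁, x.2 - w₂) * heatK1 (w₁ - z.1) t)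
            * heatK1 (w₂ + z.2) t := by
      rw [← integral_mul_const]
      congr 1; funext w₁
      rw [heatK_split ht]
      ring
    have h2 : (∫ w₁ : ℝ, d2E (x.1 - w₁, x.2 - w₂) * heatK1 (w₁ - z.1) t)
        = ∫ w : ℝ, d2E (x.1 - z.1 - w, x.2 - w₂) * heatK1 w t := by
      rw [← integral_sub_right_eq_self
        (fun w : ℝ => d2E (x.1 - z.1 - w, x.2 - w₂) * heatK1 w t) z.1]
      congr 1; funext w₁
      have h3 : x.1 - z.1 - (w₁ - z.1) = x.1 - w₁ := by ring
      rw [h3]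
    rw [h1, h2, part1 ht ha (x.1 - z.1)]
    ring

end
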